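/- Let 1 ≤ q < p < ∞, n ∈ ℕ, and let t = (t_k) be a strictly decreasing sequence of positive reals. For m = 1,…,n define δ_{j,m} = (1 − t_{m+1}^q/t_j^q)^{p/(p−q)} for j = 1,…,m, and set c₁ = t₁ and, for m ≥ 2, c_m = ( Σ_{j=1}^{m} δ_{j,m} )^{1/p} · ( Σ_{j=1}^{m} δ_{j,m}^{q/p}/t_j^q )^{−1/q}. Then the finite sequence c₁ ≥ c₂ ≥ … ≥ c_n is non-increasing. -/

import Mathlib

open scoped BigOperators

/-- The constants `c_m`: `c₁ = t₁` and, for `m ≥ 2`,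
`c_m = (∑_{j=1}^m δ_{j,m})^{1/p} · (∑_{j=1}^m δ_{j,m}^{q/p}/t_j^q)^{−1/q}`, where
`δ_{j,m} = (1 − t_{m+1}^q/t_j^q)^{p/(p−q)}` (0-based indexing: `t k` is the paper's
`t_{k+1}`). -/
noncomputable def cSeq (p q : ℝ) (t : ℕ → ℝ) : ℕ → ℝ := fun m =>
  if m = 1 then t 0 else
    (∑ j ∈ Finset.range m, (1 - t m ^ q / t j ^ q) ^ (p / (p - q))) ^ (1 / p) *
    (∑ j ∈ Finset.range m, ((1 - t m ^ q / t j ^ q) ^ (p / (p - q))) ^ (q / p) / t j ^ q)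
      ^ (-(1 / q))

/-- The key analytic lemma: the function
`d ↦ (∑ (x j + d w j)^α)^{1/p} (∑ (x j + d w j)^{α-1} w j)^{-1/q}`, with `α = p/(p-q)`,
is antitone on `[0, D]`.  This follows from differentiation and the Cauchy–Schwarz
inequality. -/
theorem cSeq_key_aux (p q : ℝ) (hq0 : 0 < q) (hqp : q < p)
    (s : Finset ℕ) (x w : ℕ → ℝ)
    (hx : ∀ j ∈ s, 0 ≤ x j) (hw : ∀ j ∈ s, 0 < w j)
    (hA0 : 0 < ∑ j ∈ s, x j ^ (p / (p - q)))
    (hB0 : 0 < ∑ j ∈ s, x j ^ (p / (p - q) - 1) * w j)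
    (D : ℝ) (hD : 0 ≤ D) :
    (∑ j ∈ s, (x j + D * w j) ^ (p / (p - q))) ^ (1 / p) *
      (∑ j ∈ s, (x j + D * w j) ^ (p / (p - q) - 1) * w j) ^ (-(1 / q)) ≤
    (∑ j ∈ s, x j ^ (p / (p - q))) ^ (1 / p) *
      (∑ j ∈ s, x j ^ (p / (p - q) - 1) * w j) ^ (-(1 / q)) := by
  have hp0 : 0 < p := hq0.trans hqp
  have hpq : 0 < p - q := sub_pos.2 hqp
  set α : ℝ := p / (p - q) with hα
  have hα1 : 1 < α := (one_lt_div hpq).2 (by linarith)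
  have hα0 : 0 < α := by linarith
  have hαm1 : 0 < α - 1 := by linarith
  set A : ℝ → ℝ := fun d => ∑ j ∈ s, (x j + d * w j) ^ α with hA
  set B : ℝ → ℝ := fun d => ∑ j ∈ s, (x j + d * w j) ^ (α - 1) * w j with hB
  set C : ℝ → ℝ := fun d => ∑ j ∈ s, (x j + d * w j) ^ (α - 2) * w j ^ 2 with hC
  have hA0' : A 0 = ∑ j ∈ s, x j ^ α := by
    rw [hA]; exact Finset.sum_congr rfl fun j _ => by rw [zero_mul, add_zero]
  have hB0' : B 0 = ∑ j ∈ s, x j ^ (α - 1) * w j := by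
    rw [hB]; exact Finset.sum_congr rfl fun j _ => by rw [zero_mul, add_zero]
  have hApos : ∀ d ∈ Set.Icc (0:ℝ) D, 0 < A d := by
    intro d hd
    refine lt_of_lt_of_le hA0 ?_
    apply Finset.sum_le_sum
    intro j hj
    exact Real.rpow_le_rpow (hx j hj) (by nlinarith [hw j hj, hd.1]) hα0.le
  have hBpos : ∀ d ∈ Set.Icc (0:ℝ) D, 0 < B d := by
    intro d hd
    refine lt_of_lt_of_le hB0 ?_
    apply Finset.sum_le_sum
    intro j hj
    have := hw j hj
    exact mul_le_mul_of_nonneg_right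
      (Real.rpow_le_rpow (hx j hj) (by nlinarith [hd.1]) hαm1.le) this.le
  have hy : ∀ d ∈ Set.Ioo (0:ℝ) D, ∀ j ∈ s, 0 < x j + d * w j := by
    intro d hd j hj
    have := hw j hj
    nlinarith [hx j hj, hd.1]
  have hAd : ∀ d ∈ Set.Ioo (0:ℝ) D, HasDerivAt A (α * B d) d := by
    intro d hd
    have : HasDerivAt (fun e => ∑ j ∈ s, (x j + e * w j) ^ α)
        (∑ j ∈ s, w j * α * (x j + d * w j) ^ (α - 1)) d := by
      apply HasDerivAt.fun_sum
      intro j hj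
      exact (((hasDerivAt_mul_const (w j)).const_add (x j)).rpow_const
        (Or.inl (hy d hd j hj).ne'))
    have h2 : (∑ j ∈ s, w j * α * (x j + d * w j) ^ (α - 1)) = α * B d := by
      rw [hB, Finset.mul_sum]; exact Finset.sum_congr rfl fun j hj => by ring
    rwa [h2] at this
  have hBd : ∀ d ∈ Set.Ioo (0:ℝ) D, HasDerivAt B ((α - 1) * C d) d := by
    intro d hd
    have : HasDerivAt (fun e => ∑ j ∈ s, (x j + e * w j) ^ (α - 1) * w j)
        (∑ j ∈ s, w j * (α - 1) * (x j + d * w j) ^ (α - 1 - 1) * w j) d := by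
      apply HasDerivAt.fun_sum
      intro j hj
      exact ((((hasDerivAt_mul_const (w j)).const_add (x j)).rpow_const
        (Or.inl (hy d hd j hj).ne')).mul_const (w j))
    have h2 : (∑ j ∈ s, w j * (α - 1) * (x j + d * w j) ^ (α - 1 - 1) * w j)
        = (α - 1) * C d := by
      rw [hC, Finset.mul_sum]
      refine Finset.sum_congr rfl fun j hj => ?_
      rw [show α - 1 - 1 = α - 2 by ring]; ring
    rwa [h2] at this
  -- Cauchy–Schwarz: B d ^ 2 ≤ A d * C d for d ∈ Ioo 0 D
  have hCS : ∀ d ∈ Set.Ioo (0:ℝ) D, B d ^ 2 ≤ A d * C d := by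
    intro d hd
    have h := Finset.sum_mul_sq_le_sq_mul_sq s
      (fun j => (x j + d * w j) ^ (α / 2))
      (fun j => (x j + d * w j) ^ ((α - 2) / 2) * w j)
    have e1 : ∑ j ∈ s, (x j + d * w j) ^ (α / 2) *
        ((x j + d * w j) ^ ((α - 2) / 2) * w j) = B d := by
      rw [hB]
      refine Finset.sum_congr rfl fun j hj => ?_
      rw [← mul_assoc, ← Real.rpow_add (hy d hd j hj),
        show α / 2 + (α - 2) / 2 = α - 1 by ring]
    have e2 : ∑ j ∈ s, ((x j + d * w j) ^ (α / 2)) ^ 2 = A d := by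
      rw [hA]
      refine Finset.sum_congr rfl fun j hj => ?_
      rw [sq, ← Real.rpow_add (hy d hd j hj), show α / 2 + α / 2 = α by ring]
    have e3 : ∑ j ∈ s, ((x j + d * w j) ^ ((α - 2) / 2) * w j) ^ 2 = C d := by
      rw [hC]
      refine Finset.sum_congr rfl fun j hj => ?_
      rw [mul_pow, sq ((x j + d * w j) ^ ((α - 2) / 2)), ← Real.rpow_add (hy d hd j hj),
        show (α - 2) / 2 + (α - 2) / 2 = α - 2 by ring]
    rwa [e1, e2, e3] at h
  -- the function H and its derivative
  set H : ℝ → ℝ := fun d => A d ^ (1 / p) * B d ^ (-(1 / q)) with hH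
  set H' : ℝ → ℝ := fun d =>
    (1 / p * A d ^ (1 / p - 1) * (α * B d)) * B d ^ (-(1 / q)) +
      A d ^ (1 / p) * (-(1 / q) * B d ^ (-(1 / q) - 1) * ((α - 1) * C d)) with hH'
  have hIoosub : Set.Ioo (0:ℝ) D ⊆ Set.Icc 0 D := Set.Ioo_subset_Icc_self
  have hHd : ∀ d ∈ Set.Ioo (0:ℝ) D, HasDerivAt H (H' d) d := by
    intro d hd
    have h1 : HasDerivAt (fun e => A e ^ (1 / p))
        (1 / p * A d ^ (1 / p - 1) * (α * B d)) d := by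
      have := (hAd d hd).rpow_const (p := 1 / p) (Or.inl (hApos d (hIoosub hd)).ne')
      convert this using 1; ring
    have h2 : HasDerivAt (fun e => B e ^ (-(1 / q)))
        (-(1 / q) * B d ^ (-(1 / q) - 1) * ((α - 1) * C d)) d := by
      have := (hBd d hd).rpow_const (p := -(1 / q)) (Or.inl (hBpos d (hIoosub hd)).ne')
      convert this using 1; ring
    exact h1.mul h2
  have hH'nonpos : ∀ d ∈ Set.Ioo (0:ℝ) D, H' d ≤ 0 := by
    intro d hd
    have hAp := hApos d (hIoosub hd)
    have hBp := hBpos d (hIoosub hd)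
    have eA : A d ^ (1 / p - 1) * A d = A d ^ (1 / p) := by
      rw [Real.rpow_sub hAp, Real.rpow_one]; field_simp
    have eB : B d ^ (-(1 / q) - 1) * B d = B d ^ (-(1 / q)) := by
      rw [Real.rpow_sub hBp, Real.rpow_one]; field_simp
    have key : H' d = A d ^ (1 / p - 1) * B d ^ (-(1 / q) - 1) *
        ((1 / (p - q)) * (B d ^ 2 - A d * C d)) := by
      simp only [hH']
      rw [← eA, ← eB, hα]
      field_simp
      ring
    rw [key]
    apply mul_nonpos_of_nonneg_of_nonpos
    · positivity
    · apply mul_nonpos_of_nonneg_of_nonpos (by positivity)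
      linarith [hCS d hd]
  have hAc : Continuous A := by
    apply continuous_finset_sum
    intro j _
    exact (Real.continuous_rpow_const hα0.le).comp
      (continuous_const.add (continuous_id.mul continuous_const))
  have hBc : Continuous B := by
    apply continuous_finset_sum
    intro j _
    exact ((Real.continuous_rpow_const hαm1.le).comp
      (continuous_const.add (continuous_id.mul continuous_const))).mul continuous_const
  have hHcont : ContinuousOn H (Set.Icc 0 D) := by
    apply ContinuousOn.mul
    · exact ContinuousOn.rpow_const hAc.continuousOn fun d hd => Or.inl (hApos d hd).ne'
    · exact ContinuousOn.rpow_const hBc.continuousOn fun d hd => Or.inl (hBpos d hd).ne'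
  have hanti : AntitoneOn H (Set.Icc 0 D) := by
    apply antitoneOn_of_hasDerivWithinAt_nonpos (convex_Icc 0 D) hHcont
    · intro d hd
      rw [interior_Icc] at hd
      exact (hHd d hd).hasDerivWithinAt
    · intro d hd
      rw [interior_Icc] at hd
      exact hH'nonpos d hd
  have hfin : H D ≤ H 0 := hanti (Set.left_mem_Icc.2 hD) (Set.right_mem_Icc.2 hD) hD
  have h0 : H 0 = (∑ j ∈ s, x j ^ α) ^ (1 / p) *
      (∑ j ∈ s, x j ^ (α - 1) * w j) ^ (-(1 / q)) := by
    simp only [hH]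
    rw [hA0', hB0']
  have hDeq : H D = (∑ j ∈ s, (x j + D * w j) ^ α) ^ (1 / p) *
      (∑ j ∈ s, (x j + D * w j) ^ (α - 1) * w j) ^ (-(1 / q)) := rfl
  rw [hDeq, h0] at hfin
  exact hfin

/-- The inequality between the explicit formulas for `c_{m+1}` and `c_m`. -/
theorem cSeq_Estep (p q : ℝ) (hq0 : 0 < q) (hqp : q < p)
    (t : ℕ → ℝ) (htpos : ∀ k, 0 < t k) (ht : StrictAnti t) (m : ℕ) (hm : 1 ≤ m) :
    (∑ j ∈ Finset.range (m+1), (1 - t (m+1) ^ q / t j ^ q) ^ (p / (p - q))) ^ (1 / p) *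
    (∑ j ∈ Finset.range (m+1),
        ((1 - t (m+1) ^ q / t j ^ q) ^ (p / (p - q))) ^ (q / p) / t j ^ q) ^ (-(1 / q)) ≤
    (∑ j ∈ Finset.range m, (1 - t m ^ q / t j ^ q) ^ (p / (p - q))) ^ (1 / p) *
    (∑ j ∈ Finset.range m,
        ((1 - t m ^ q / t j ^ q) ^ (p / (p - q))) ^ (q / p) / t j ^ q) ^ (-(1 / q)) := by
  have hp0 : 0 < p := hq0.trans hqp
  have hpq : 0 < p - q := sub_pos.2 hqp
  set α : ℝ := p / (p - q) with hα
  have hα1 : 1 < α := (one_lt_div hpq).2 (by linarith)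
  have htq : ∀ k, 0 < t k ^ q := fun k => Real.rpow_pos_of_pos (htpos k) q
  have htqlt : ∀ {a b : ℕ}, a < b → t b ^ q < t a ^ q := fun {a b} hab =>
    Real.rpow_lt_rpow (htpos b).le (ht hab) hq0
  set x : ℕ → ℝ := fun j => 1 - t m ^ q / t j ^ q with hxdef
  set w : ℕ → ℝ := fun j => (t j ^ q)⁻¹ with hwdef
  set D : ℝ := t m ^ q - t (m+1) ^ q with hDdef
  have hD : 0 ≤ D := by
    have := htqlt (Nat.lt_succ_self m)
    simp only [hDdef]; linarith
  have hx : ∀ j ∈ Finset.range (m+1), 0 ≤ x j := by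
    intro j hj
    rw [Finset.mem_range, Nat.lt_succ_iff] at hj
    have h1 : t m ^ q ≤ t j ^ q := by
      rcases eq_or_lt_of_le hj with h | h
      · rw [h]
      · exact (htqlt h).le
    have := htq j
    simp only [hxdef]
    rw [sub_nonneg, div_le_one this]
    exact h1
  have hw : ∀ j ∈ Finset.range (m+1), 0 < w j := fun j _ => inv_pos.2 (htq j)
  have hx0 : 0 < x 0 := by
    have h1 : t m ^ q < t 0 ^ q := htqlt hm
    have := htq 0
    simp only [hxdef]
    rw [sub_pos, div_lt_one this]
    exact h1
  have hαq : α * (q / p) = α - 1 := by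
    field_simp [hα]
    rw [hα]; field_simp; ring
  -- conversion of second-sum terms
  have hterm2 : ∀ b : ℝ, 0 ≤ b → ∀ j : ℕ,
      ((b ^ α) ^ (q / p)) / t j ^ q = b ^ (α - 1) * w j := by
    intro b hb j
    rw [← Real.rpow_mul hb, hαq, div_eq_mul_inv]
  -- base identity for the bigger index
  have hbase : ∀ j : ℕ, 1 - t (m+1) ^ q / t j ^ q = x j + D * w j := by
    intro j
    have := (htq j).ne'
    simp only [hxdef, hwdef, hDdef]
    field_simp
    ring
  have hA0 : 0 < ∑ j ∈ Finset.range (m+1), x j ^ α := by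
    apply Finset.sum_pos'
    · intro j hj
      exact Real.rpow_nonneg (hx j hj) α
    · exact ⟨0, Finset.mem_range.2 (by omega), Real.rpow_pos_of_pos hx0 α⟩
  have hB0 : 0 < ∑ j ∈ Finset.range (m+1), x j ^ (α - 1) * w j := by
    apply Finset.sum_pos'
    · intro j hj
      exact mul_nonneg (Real.rpow_nonneg (hx j hj) _) (hw j hj).le
    · exact ⟨0, Finset.mem_range.2 (by omega),
        mul_pos (Real.rpow_pos_of_pos hx0 _) (hw 0 (Finset.mem_range.2 (by omega)))⟩
  have hkey := cSeq_key_aux p q hq0 hqp (Finset.range (m+1)) x w hx hw hA0 hB0 D hD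
  -- rewrite the four sums
  have e1 : ∑ j ∈ Finset.range (m+1), (1 - t (m+1) ^ q / t j ^ q) ^ α
      = ∑ j ∈ Finset.range (m+1), (x j + D * w j) ^ α :=
    Finset.sum_congr rfl fun j _ => by rw [hbase j]
  have e2 : ∑ j ∈ Finset.range (m+1),
        ((1 - t (m+1) ^ q / t j ^ q) ^ α) ^ (q / p) / t j ^ q
      = ∑ j ∈ Finset.range (m+1), (x j + D * w j) ^ (α - 1) * w j := by
    refine Finset.sum_congr rfl fun j hj => ?_
    have hb : (0:ℝ) ≤ 1 - t (m+1) ^ q / t j ^ q := by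
      rw [hbase j]
      have := hw j hj
      nlinarith [hx j hj]
    rw [hterm2 _ hb j, hbase j]
  have e3 : ∑ j ∈ Finset.range m, (1 - t m ^ q / t j ^ q) ^ α
      = ∑ j ∈ Finset.range (m+1), x j ^ α := by
    rw [Finset.sum_range_succ]
    have hxm : x m = 0 := by
      simp only [hxdef]
      rw [div_self (htq m).ne']
      ring
    rw [hxm, Real.zero_rpow (by positivity), add_zero]
  have e4 : ∑ j ∈ Finset.range m, ((1 - t m ^ q / t j ^ q) ^ α) ^ (q / p) / t j ^ q
      = ∑ j ∈ Finset.range (m+1), x j ^ (α - 1) * w j := by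
    rw [Finset.sum_range_succ]
    have hxm : x m = 0 := by
      simp only [hxdef]
      rw [div_self (htq m).ne']
      ring
    rw [hxm, Real.zero_rpow
      (by intro h; rw [sub_eq_zero] at h; exact absurd h.symm hα1.ne), zero_mul, add_zero]
    refine Finset.sum_congr rfl fun j hj => ?_
    exact hterm2 _ (hx j (Finset.mem_range.2 (Nat.lt_succ_of_lt (Finset.mem_range.1 hj)))) j
  rw [e1, e2, e3, e4]
  exact hkey

/-- The explicit formula at `m = 1` evaluates to `t 0`. -/
theorem cSeq_Eone (p q : ℝ) (hq0 : 0 < q) (hqp : q < p)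
    (t : ℕ → ℝ) (htpos : ∀ k, 0 < t k) (ht : StrictAnti t) :
    (∑ j ∈ Finset.range 1, (1 - t 1 ^ q / t j ^ q) ^ (p / (p - q))) ^ (1 / p) *
    (∑ j ∈ Finset.range 1,
        ((1 - t 1 ^ q / t j ^ q) ^ (p / (p - q))) ^ (q / p) / t j ^ q) ^ (-(1 / q)) = t 0 := by
  have hp0 : 0 < p := hq0.trans hqp
  have hpq : 0 < p - q := sub_pos.2 hqp
  set α : ℝ := p / (p - q) with hα
  have ht0 : 0 < t 0 := htpos 0
  have htq0 : 0 < t 0 ^ q := Real.rpow_pos_of_pos ht0 q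
  have hu : 0 < 1 - t 1 ^ q / t 0 ^ q := by
    rw [sub_pos, div_lt_one htq0]
    exact Real.rpow_lt_rpow (htpos 1).le (ht Nat.zero_lt_one) hq0
  set u : ℝ := 1 - t 1 ^ q / t 0 ^ q with hudef
  rw [Finset.sum_range_one, Finset.sum_range_one]
  rw [← Real.rpow_mul hu.le, ← Real.rpow_mul hu.le,
    Real.div_rpow (Real.rpow_nonneg hu.le _) htq0.le,
    ← Real.rpow_mul hu.le, ← Real.rpow_mul ht0.le,
    show q * -(1 / q) = -1 by field_simp, Real.rpow_neg_one, div_inv_eq_mul,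
    ← mul_assoc, ← Real.rpow_add hu]
  have hexp : α * (1 / p) + α * (q / p) * -(1 / q) = 0 := by
    rw [hα]; field_simp; ring
  rw [hexp, Real.rpow_zero, one_mul]

/-- for `1 ≤ q < p < ∞` and a strictly decreasing positive sequence `t`,
the finite sequence `c₁ ≥ c₂ ≥ … ≥ c_n` is non-increasing. -/
theorem cSeq_antitone (p q : ℝ) (hq : 1 ≤ q) (hqp : q < p)
    (t : ℕ → ℝ) (htpos : ∀ k, 0 < t k) (ht : StrictAnti t) (n : ℕ) :
    ∀ m, 1 ≤ m → m + 1 ≤ n → cSeq p q t (m + 1) ≤ cSeq p q t m := by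
  intro m hm _
  have hq0 : 0 < q := lt_of_lt_of_le one_pos hq
  have hstep := cSeq_Estep p q hq0 hqp t htpos ht m hm
  simp only [cSeq]
  rw [if_neg (by omega : ¬ m + 1 = 1)]
  by_cases h1 : m = 1
  · subst h1
    rw [if_pos rfl, ← cSeq_Eone p q hq0 hqp t htpos ht]
    exact hstep
  · rw [if_neg h1]
    exact hstep
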